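/- Let G be a graph and A a set of open twins in G (all vertices in A have equal open neighborhoods). Then there exists a Grundy dominating sequence S of G (a dominating sequence of maximum length) in which all vertices of A that appear in S appear consecutively. -/

import Mathlib

open Finset

variable {V : Type*}

/-- The closed neighborhood of a vertex. -/
def CN (G : SimpleGraph V) (v : V) : Set V := insert v (G.neighborSet v)

/-- A closed neighborhood (legal) sequence: distinct vertices, each footprinting
a vertex not dominated by the closed neighborhoods of earlier vertices. -/
def IsCNSeq (G : SimpleGraph V) (S : List V) : Prop :=
  S.Nodup ∧ ∀ i : Fin S.length, ∃ u, u ∈ CN G (S.get i) ∧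
    ∀ j : Fin S.length, j < i → u ∉ CN G (S.get j)

/-- A dominating sequence: a closed neighborhood sequence whose vertex set dominates. -/
def IsDomSeq (G : SimpleGraph V) (S : List V) : Prop :=
  IsCNSeq G S ∧ ∀ v : V, ∃ u ∈ S, v ∈ CN G u

/-- The Grundy domination number: the maximum length of a dominating sequence. -/
noncomputable def grundyDom (G : SimpleGraph V) : ℕ :=
  sSup {n | ∃ S : List V, IsDomSeq G S ∧ S.length = n}

/-- An equivalent, decomposition-based formulation of legality. -/
def Legal (G : SimpleGraph V) (S : List V) : Prop :=
  ∀ pre x suf, S = pre ++ x :: suf → ∃ u ∈ CN G x, ∀ y ∈ pre, u ∉ CN G y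

lemma isCNSeq_iff (G : SimpleGraph V) (S : List V) :
    IsCNSeq G S ↔ S.Nodup ∧ Legal G S := by
  constructor
  · rintro ⟨hnd, h⟩
    refine ⟨hnd, ?_⟩
    rintro pre x suf rfl
    have hi : pre.length < (pre ++ x :: suf).length := by
      simp [List.length_append]
    obtain ⟨u, hu, hj⟩ := h ⟨pre.length, hi⟩
    have hx : (pre ++ x :: suf).get ⟨pre.length, hi⟩ = x := by
      simp [List.get_eq_getElem, List.getElem_append_right]
    refine ⟨u, hx ▸ hu, ?_⟩
    intro y hy
    obtain ⟨j, hjlt, hjy⟩ := List.mem_iff_getElem.mp hy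
    have hjlt' : j < (pre ++ x :: suf).length := by
      simp [List.length_append]; omega
    have := hj ⟨j, hjlt'⟩ (by simp [Fin.lt_def]; omega)
    rwa [List.get_eq_getElem, List.getElem_append_left hjlt, hjy] at this
  · rintro ⟨hnd, h⟩
    refine ⟨hnd, ?_⟩
    intro i
    have hdec : S = S.take i ++ S[i] :: S.drop (i+1) :=
      (List.take_append_drop i S).symm.trans (by rw [List.drop_eq_getElem_cons i.isLt]; rfl)
    obtain ⟨u, hu, hy⟩ := h _ _ _ hdec
    refine ⟨u, by rw [List.get_eq_getElem]; exact hu, ?_⟩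
    intro j hj
    apply hy
    rw [List.get_eq_getElem]
    have hj' : (j:ℕ) < (↑i : ℕ) := hj
    have hjlt : (j:ℕ) < (S.take i).length := by
      rw [List.length_take]; exact lt_min hj' j.isLt
    have : S[(j:ℕ)] = (S.take i)[(j:ℕ)]'hjlt := List.getElem_take.symm
    rw [this]
    exact List.getElem_mem _

lemma legal_append {G : SimpleGraph V} {L M : List V} :
    Legal G (L ++ M) ↔ Legal G L ∧
      ∀ pre x suf, M = pre ++ x :: suf →
        ∃ u ∈ CN G x, ∀ y ∈ L ++ pre, u ∉ CN G y := by
  constructor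
  · intro h
    constructor
    · rintro pre x suf rfl
      obtain ⟨u, hu, hy⟩ := h pre x (suf ++ M) (by simp)
      exact ⟨u, hu, hy⟩
    · rintro pre x suf rfl
      obtain ⟨u, hu, hy⟩ := h (L ++ pre) x suf (by simp)
      exact ⟨u, hu, hy⟩
  · rintro ⟨h1, h2⟩ pre x suf heq
    rcases List.append_eq_append_iff.mp heq with ⟨a', ha1, ha2⟩ | ⟨c', hc1, hc2⟩
    · obtain ⟨u, hu, hy⟩ := h2 a' x suf ha2
      subst ha1
      exact ⟨u, hu, hy⟩
    · cases c' with
      | nil =>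
        simp at hc1 hc2
        obtain ⟨u, hu, hy⟩ := h2 [] x suf hc2.symm
        subst hc1
        exact ⟨u, hu, by simpa using hy⟩
      | cons z c'' =>
        simp at hc2
        obtain ⟨rfl, rfl⟩ := hc2
        exact h1 pre x c'' hc1

lemma exists_max_seq [Fintype V] (G : SimpleGraph V) :
    ∃ S₀ : List V, IsDomSeq G S₀ ∧ S₀.length = grundyDom G := by
  classical
  set T : Set ℕ := {n | ∃ S : List V, S.Nodup ∧ Legal G S ∧ S.length = n} with hT
  have h0 : (0:ℕ) ∈ T := ⟨[], List.nodup_nil, by rintro pre x suf h; simp at h, rfl⟩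
  have hbdd : ∀ n ∈ T, n ≤ Fintype.card V := by
    rintro n ⟨S, hnd, _, rfl⟩
    exact hnd.length_le_card
  have hsup : sSup T ∈ T := Nat.sSup_mem ⟨0, h0⟩ ⟨_, hbdd⟩
  obtain ⟨S₀, hnd, hleg, hlen⟩ := hsup
  have hdom : ∀ v : V, ∃ u ∈ S₀, v ∈ CN G u := by
    by_contra hc
    push_neg at hc
    obtain ⟨v, hv⟩ := hc
    have hvS : v ∉ S₀ := fun h => hv v h (Set.mem_insert _ _)
    have hnd' : (S₀ ++ [v]).Nodup := by
      rw [List.nodup_append]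
      exact ⟨hnd, List.nodup_singleton v, by intro a ha b hb hab; simp at hb; subst hb; exact hvS (hab ▸ ha)⟩
    have hleg' : Legal G (S₀ ++ [v]) := by
      rw [legal_append]
      refine ⟨hleg, ?_⟩
      intro pre x suf h
      match pre, h with
      | [], h =>
        obtain ⟨hxv, -⟩ : x = v ∧ suf = [] := by simpa using h.symm
        exact ⟨x, Set.mem_insert _ _, by simpa using fun y hy => hxv ▸ hv y hy⟩
      | p :: pre', h =>
        exfalso
        have := congrArg List.length h
        simp at this
    have : S₀.length + 1 ∈ T := ⟨S₀ ++ [v], hnd', hleg', by simp⟩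
    have hle : S₀.length + 1 ≤ sSup T := le_csSup ⟨_, hbdd⟩ this
    omega
  refine ⟨S₀, ⟨(isCNSeq_iff G S₀).mpr ⟨hnd, hleg⟩, hdom⟩, ?_⟩
  have hgr : IsGreatest {n | ∃ S : List V, IsDomSeq G S ∧ S.length = n} S₀.length := by
    constructor
    · exact ⟨S₀, ⟨(isCNSeq_iff G S₀).mpr ⟨hnd, hleg⟩, hdom⟩, rfl⟩
    · rintro n ⟨S, ⟨hcn, _⟩, rfl⟩
      obtain ⟨hnd2, hleg2⟩ := (isCNSeq_iff G S).mp hcn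
      rw [hlen]
      exact le_csSup ⟨_, hbdd⟩ ⟨S, hnd2, hleg2, rfl⟩
  rw [grundyDom, hgr.csSup_eq]

lemma filter_decomp {p : V → Bool} :
    ∀ {L l₁ : List V} {x : V} {l₂ : List V}, L.filter p = l₁ ++ x :: l₂ →
      ∃ m₁ m₂, L = m₁ ++ x :: m₂ ∧ m₁.filter p = l₁ ∧ m₂.filter p = l₂ := by
  intro L
  induction L with
  | nil => intro l₁ x l₂ h; simp at h
  | cons h₀ t ih =>
    intro l₁ x l₂ h
    by_cases hp : p h₀
    · rw [List.filter_cons_of_pos hp] at h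
      cases l₁ with
      | nil =>
        simp at h
        obtain ⟨rfl, h2⟩ := h
        exact ⟨[], t, rfl, rfl, h2⟩
      | cons z l₁' =>
        simp at h
        obtain ⟨rfl, h2⟩ := h
        obtain ⟨m₁, m₂, rfl, hm1, hm2⟩ := ih h2
        exact ⟨h₀ :: m₁, m₂, rfl, by rw [List.filter_cons_of_pos hp, hm1], hm2⟩
    · rw [List.filter_cons_of_neg (by simpa using hp)] at h
      obtain ⟨m₁, m₂, rfl, hm1, hm2⟩ := ih h
      exact ⟨h₀ :: m₁, m₂, rfl, by rw [List.filter_cons_of_neg (by simpa using hp), hm1], hm2⟩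

lemma consec {A : Set V} {S L₁ M L₂ : List V} (hS : S = L₁ ++ M ++ L₂)
    (h₁ : ∀ y ∈ L₁, y ∉ A) (hM : ∀ y ∈ M, y ∈ A) (h₂ : ∀ y ∈ L₂, y ∉ A) :
    ∀ p q r : Fin S.length, p ≤ q → q ≤ r →
      S.get p ∈ A → S.get r ∈ A → S.get q ∈ A := by
  subst hS
  have claim1 : ∀ (i : ℕ) (h : i < (L₁ ++ M ++ L₂).length),
      (L₁ ++ M ++ L₂)[i] ∈ A → L₁.length ≤ i ∧ i < L₁.length + M.length := by
    intro i h hi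
    constructor
    · by_contra hlt
      push_neg at hlt
      have h1 : i < (L₁ ++ M).length := by simp; omega
      rw [List.getElem_append_left h1, List.getElem_append_left hlt] at hi
      exact h₁ _ (List.getElem_mem _) hi
    · by_contra hge
      push_neg at hge
      have h1 : (L₁ ++ M).length ≤ i := by simp; omega
      rw [List.getElem_append_right h1] at hi
      exact h₂ _ (List.getElem_mem _) hi
  have claim2 : ∀ (i : ℕ) (h : i < (L₁ ++ M ++ L₂).length),
      L₁.length ≤ i → i < L₁.length + M.length → (L₁ ++ M ++ L₂)[i] ∈ A := by
    intro i h hge hlt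
    have h1 : i < (L₁ ++ M).length := by simp; omega
    rw [List.getElem_append_left h1, List.getElem_append_right hge]
    exact hM _ (List.getElem_mem _)
  intro p q r hpq hqr hp hr
  rw [List.get_eq_getElem] at hp hr ⊢
  obtain ⟨hp1, -⟩ := claim1 p p.isLt hp
  obtain ⟨-, hr2⟩ := claim1 r r.isLt hr
  have hpq' : (p:ℕ) ≤ q := hpq
  have hqr' : (q:ℕ) ≤ r := hqr
  exact claim2 q q.isLt (le_trans hp1 hpq') (lt_of_le_of_lt hqr' hr2)

/-- If `A` is a set of open twins in `G`, then there is a Grundy dominating sequence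
in which the vertices of `A` that appear, appear consecutively. -/
theorem exists_grundy_seq_twins_consecutive {V : Type*} [Fintype V] [DecidableEq V]
    (G : SimpleGraph V) (A : Set V)
    (hA : ∀ u ∈ A, ∀ v ∈ A, G.neighborSet u = G.neighborSet v) :
    ∃ S : List V, IsDomSeq G S ∧ S.length = grundyDom G ∧
      ∀ p q r : Fin S.length, p ≤ q → q ≤ r →
        S.get p ∈ A → S.get r ∈ A → S.get q ∈ A := by
  classical
  obtain ⟨S₀, ⟨hcn, hdom⟩, hlen⟩ := exists_max_seq G
  obtain ⟨hnd, hleg⟩ := (isCNSeq_iff G S₀).mp hcn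
  by_cases hex : ∃ x ∈ S₀, x ∈ A
  · set pb : V → Bool := fun x => decide (x ∈ A) with hpb
    set P := S₀.takeWhile (fun x => !pb x) with hP
    set D := S₀.dropWhile (fun x => !pb x) with hD
    have hPD : S₀ = P ++ D := List.takeWhile_append_dropWhile.symm
    have hPA : ∀ y ∈ P, y ∉ A := by
      intro y hy
      have := List.mem_takeWhile_imp hy
      simpa [hpb] using this
    have hDne : D ≠ [] := by
      intro h
      obtain ⟨x, hx, hxA⟩ := hex
      rw [hPD, h, List.append_nil] at hx
      exact hPA x hx hxA
    obtain ⟨a, T0, haT⟩ : ∃ a T0, D = a :: T0 := by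
      cases hD0 : D with
      | nil => exact absurd hD0 hDne
      | cons a T0 => exact ⟨a, T0, rfl⟩
    have hD' : S₀.dropWhile (fun x => !pb x) = a :: T0 := by rw [← hD]; exact haT
    have haA : a ∈ A := by
      have h1 := List.head?_dropWhile_not (fun x => !pb x) S₀
      rw [hD'] at h1
      simpa [hpb] using h1
    set T₁ := T0.filter pb with hT₁
    set T₂ := T0.filter (fun x => !pb x) with hT₂
    have hS0 : S₀ = (P ++ [a]) ++ T0 := by rw [hPD, haT]; simp
    have hT₁A : ∀ y ∈ T₁, y ∈ A := by
      intro y hy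
      have := List.of_mem_filter hy
      simpa [hpb] using this
    have hT₂A : ∀ y ∈ T₂, y ∉ A := by
      intro y hy
      have := List.of_mem_filter hy
      simpa [hpb] using this
    have htwin : ∀ w y : V, w ∈ A → y ∈ A → w ≠ y → w ∉ CN G y := by
      intro w y hw hy hne hmem
      rw [CN, Set.mem_insert_iff] at hmem
      rcases hmem with rfl | hmem
      · exact hne rfl
      · rw [hA y hy w hw] at hmem
        exact G.irrefl hmem
    have hNsub : ∀ w ∈ A, (G.neighborSet w : Set V) ⊆ CN G a := by
      intro w hw
      rw [hA w hw a haA]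
      exact Set.subset_insert _ _
    have hK : ∀ Q w R, S₀ = Q ++ w :: R → a ∈ Q → w ∈ A → ∀ y ∈ Q, w ∉ CN G y := by
      intro Q w R hQ haQ hwA
      obtain ⟨u, hu, hy⟩ := hleg Q w R hQ
      rw [CN, Set.mem_insert_iff] at hu
      rcases hu with rfl | hu
      · exact hy
      · exact absurd (hNsub w hwA hu) (hy a haQ)
    have hT0nd : T0.Nodup := by
      rw [hS0] at hnd
      exact hnd.of_append_right
    have hT₁nd : T₁.Nodup := hT0nd.filter _
    have hleg0 : Legal G ((P ++ [a]) ++ T0) := by rw [← hS0]; exact hleg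
    have hLP : Legal G (P ++ [a]) := (legal_append.mp hleg0).1
    have hcond0 := (legal_append.mp hleg0).2
    have hleg1 : Legal G ((P ++ [a]) ++ T₁) := by
      rw [legal_append]
      refine ⟨hLP, ?_⟩
      intro pre x suf hT₁eq
      obtain ⟨m₁, m₂, hT0eq, hm1, hm2⟩ := filter_decomp hT₁eq
      have hxA : x ∈ A := hT₁A x (by rw [hT₁eq]; simp)
      have hSdec : S₀ = (P ++ a :: m₁) ++ x :: m₂ := by rw [hS0, hT0eq]; simp
      have hKx := hK _ x _ hSdec (by simp) hxA
      refine ⟨x, Set.mem_insert _ _, ?_⟩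
      intro y hy
      rcases List.mem_append.mp hy with hy1 | hy2
      · refine hKx y ?_
        rcases List.mem_append.mp hy1 with h | h
        · exact List.mem_append_left _ h
        · simp at h
          simp [h]
      · have hyT₁ : y ∈ T₁ := by rw [hT₁eq]; exact List.mem_append_left _ hy2
        have hxpre : x ∉ pre := by
          have hnd2 : (pre ++ x :: suf).Nodup := by rw [← hT₁eq]; exact hT₁nd
          rw [List.nodup_append] at hnd2
          exact fun hc => hnd2.2.2 x hc x List.mem_cons_self rfl
        have hynx : y ≠ x := fun h => hxpre (h ▸ hy2)
        exact htwin x y hxA (hT₁A y hyT₁) hynx.symm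
    have hleg2 : Legal G (((P ++ [a]) ++ T₁) ++ T₂) := by
      rw [legal_append]
      refine ⟨hleg1, ?_⟩
      intro pre x suf hT₂eq
      obtain ⟨m₁, m₂, hT0eq, hm1, hm2⟩ := filter_decomp hT₂eq
      have hxA : x ∉ A := hT₂A x (by rw [hT₂eq]; simp)
      obtain ⟨u, hu, hy⟩ := hcond0 m₁ x m₂ hT0eq
      have hua : u ∉ CN G a := hy a (by simp)
      have hKm₂ : ∀ w, w ∈ A → w ∈ m₂ → u ∉ CN G w := by
        intro w hwA hwm₂
        obtain ⟨n₁, n₂, hn⟩ := List.append_of_mem hwm₂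
        have hSdec2 : S₀ = (P ++ a :: m₁ ++ x :: n₁) ++ w :: n₂ := by
          rw [hS0, hT0eq, hn]; simp
        have hKw := hK _ w _ hSdec2 (by simp) hwA
        rw [CN, Set.mem_insert_iff]
        rintro (rfl | hu2)
        · exact hKw x (by simp) hu
        · exact hua (hNsub w hwA hu2)
      refine ⟨u, hu, ?_⟩
      intro y hyy
      rcases List.mem_append.mp hyy with hy1 | hy2
      · rcases List.mem_append.mp hy1 with hy11 | hy12
        · exact hy y (List.mem_append_left _ hy11)
        · have hyA := hT₁A y hy12
          have hyT0 : y ∈ T0 := List.mem_of_mem_filter hy12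
          rw [hT0eq] at hyT0
          rcases List.mem_append.mp hyT0 with h | h
          · exact hy y (List.mem_append_right _ h)
          · rcases List.mem_cons.mp h with rfl | h2
            · exact absurd hyA hxA
            · exact hKm₂ y hyA h2
      · have hym₁ : y ∈ m₁ := by
          rw [← hm1] at hy2
          exact List.mem_of_mem_filter hy2
        exact hy y (List.mem_append_right _ hym₁)
    set S' := ((P ++ [a]) ++ T₁) ++ T₂ with hS'
    have hperm : S'.Perm S₀ := by
      rw [hS0]
      have h1 : S' = (P ++ [a]) ++ (T₁ ++ T₂) := by simp [hS', List.append_assoc]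
      rw [h1]
      exact List.Perm.append_left _ (List.filter_append_perm pb T0)
    have hnd' : S'.Nodup := hperm.nodup_iff.mpr hnd
    have hdom' : ∀ v : V, ∃ u ∈ S', v ∈ CN G u := by
      intro v
      obtain ⟨u, hu1, hu2⟩ := hdom v
      exact ⟨u, hperm.mem_iff.mpr hu1, hu2⟩
    refine ⟨S', ⟨(isCNSeq_iff G S').mpr ⟨hnd', hleg2⟩, hdom'⟩, by rw [hperm.length_eq, hlen], ?_⟩
    refine consec (L₁ := P) (M := a :: T₁) (L₂ := T₂) (by simp [hS', List.append_assoc]) hPA ?_ hT₂A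
    intro y hy
    rcases List.mem_cons.mp hy with rfl | h
    · exact haA
    · exact hT₁A y h
  · refine ⟨S₀, ⟨hcn, hdom⟩, hlen, ?_⟩
    intro p q r _ _ hp _
    exact absurd ⟨S₀.get p, S₀.get_mem p, hp⟩ hex
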